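/- Let A be an m × n real matrix and let d be an elementary vector of Null(A), the null space of A. Then supp(d) ≤ rank(A) + 1. -/

import Mathlib

/-- `d'` is conformal to `d`: the support of `d'` is contained in the support of `d`
and `d_i d'_i ≥ 0` for every coordinate `i`. -/
def IsConformal {n : ℕ} (d' d : Fin n → ℝ) : Prop :=
  {i | d' i ≠ 0} ⊆ {i | d i ≠ 0} ∧ ∀ i, 0 ≤ d i * d' i

/-- `d` is an elementary vector of the subspace `S`. -/
def IsElementary {n : ℕ} (S : Submodule ℝ (Fin n → ℝ)) (d : Fin n → ℝ) : Prop :=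
  d ∈ S ∧ d ≠ 0 ∧
    ¬∃ d' : Fin n → ℝ, d' ∈ S ∧ d' ≠ 0 ∧ IsConformal d' d ∧ {i | d' i ≠ 0} ⊂ {i | d i ≠ 0}

/-- An elementary vector has minimal support: there is no nonzero vector of `S` whose
support is strictly contained in that of `d`. -/
lemma minimal_support {n : ℕ} (S : Submodule ℝ (Fin n → ℝ)) (d : Fin n → ℝ)
    (hd : IsElementary S d) (d' : Fin n → ℝ) (hd'S : d' ∈ S) (hd'0 : d' ≠ 0)
    (hss : {i | d' i ≠ 0} ⊂ {i | d i ≠ 0}) : False := by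
  classical
  obtain ⟨hdS, hd0, hmin⟩ := hd
  obtain ⟨i0, hi0⟩ : ∃ i, d' i ≠ 0 := by
    by_contra h; push_neg at h; exact hd'0 (funext fun i => h i)
  set F : Finset (Fin n) := Finset.univ.filter (fun i => d' i ≠ 0) with hF
  have hFne : F.Nonempty := ⟨i0, by simp [hF, hi0]⟩
  obtain ⟨j, hjF, hj⟩ := F.exists_min_image (fun i => |d i| / |d' i|) hFne
  have hd'j : d' j ≠ 0 := by simpa [hF] using hjF
  set t := d j / d' j with ht
  set e := d - t • d' with he
  have hsub : {i | e i ≠ 0} ⊆ {i | d i ≠ 0} := by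
    intro i hi
    simp only [Set.mem_setOf_eq] at hi ⊢
    intro hdi
    have hd'i : d' i = 0 := by
      by_contra h
      exact (hss.1 h) hdi
    apply hi
    simp [he, hdi, hd'i]
  have hconf : IsConformal e d := by
    refine ⟨hsub, fun i => ?_⟩
    by_cases hd'i : d' i = 0
    · have : e i = d i := by simp [he, hd'i]
      rw [this]; exact mul_self_nonneg _
    · have hdi : d i ≠ 0 := hss.1 hd'i
      have hmin' : |d j| / |d' j| ≤ |d i| / |d' i| := hj i (by simp [hF, hd'i])
      have h1 : |d j| * |d' i| ≤ |d i| * |d' j| := by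
        rw [div_le_div_iff₀ (abs_pos.2 hd'j) (abs_pos.2 hd'i)] at hmin'
        exact hmin'
      have key : t * (d' i * d i) ≤ d i ^ 2 := by
        calc t * (d' i * d i) ≤ |t * (d' i * d i)| := le_abs_self _
          _ = |d j| / |d' j| * (|d' i| * |d i|) := by
              rw [abs_mul, abs_mul, ht, abs_div]
          _ = |d j| * |d' i| * |d i| / |d' j| := by ring
          _ ≤ |d i| * |d' j| * |d i| / |d' j| := by gcongr
          _ = |d i| * |d i| * (|d' j| / |d' j|) := by ring
          _ = d i ^ 2 := by
              rw [div_self (abs_ne_zero.2 hd'j), mul_one, abs_mul_abs_self, sq]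
      have : e i = d i - t * d' i := by simp [he]
      rw [this]
      nlinarith [key]
  have hej : e j = 0 := by
    simp only [he, Pi.sub_apply, Pi.smul_apply, smul_eq_mul, ht]
    field_simp
    ring
  obtain ⟨k, hk1, hk2⟩ := Set.exists_of_ssubset hss
  have hdk : d k ≠ 0 := hk1
  have hd'k : d' k = 0 := by simpa using hk2
  have he0 : e ≠ 0 := by
    intro h
    have : e k = 0 := by rw [h]; rfl
    rw [he] at this
    simp [hd'k] at this
    exact hdk this
  have hstrict : {i | e i ≠ 0} ⊂ {i | d i ≠ 0} := by
    refine ⟨hsub, fun h => ?_⟩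
    have : e j ≠ 0 := h (hss.1 hd'j)
    exact this hej
  exact hmin ⟨e, S.sub_mem hdS (S.smul_mem t hd'S), he0, hconf, hstrict⟩

/-- an elementary vector `d` of the null space of a real `m × n` matrix
`A` satisfies `supp(d) ≤ rank(A) + 1`. -/
theorem stmt_10 {m n : ℕ} (A : Matrix (Fin m) (Fin n) ℝ) (d : Fin n → ℝ)
    (hd : IsElementary (LinearMap.ker A.mulVecLin) d) :
    {i | d i ≠ 0}.ncard ≤ A.rank + 1 := by
  classical
  by_contra hlt
  push_neg at hlt
  set T : Finset (Fin n) := Finset.univ.filter (fun i => d i ≠ 0) with hT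
  have hcard : {i | d i ≠ 0}.ncard = T.card := by
    rw [Set.ncard_eq_toFinset_card']
    congr 1
    ext i
    simp [hT]
  -- inclusion of T-supported vectors
  let ι : ({i // i ∈ T} → ℝ) →ₗ[ℝ] (Fin n → ℝ) :=
    { toFun := fun x i => if h : i ∈ T then x ⟨i, h⟩ else 0
      map_add' := by intro x y; funext i; by_cases h : i ∈ T <;> simp [h]
      map_smul' := by intro c x; funext i; by_cases h : i ∈ T <;> simp [h] }
  have hι_inj : Function.Injective ι := by
    intro x y hxy
    funext ⟨i, hi⟩
    have := congrFun hxy i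
    simpa [ι, hi] using this
  set φ := A.mulVecLin ∘ₗ ι with hφ
  have hrank : Module.finrank ℝ (LinearMap.range φ) ≤ A.rank := by
    rw [Matrix.rank]
    exact Submodule.finrank_mono (LinearMap.range_comp_le_range ι A.mulVecLin)
  have hdim : Module.finrank ℝ ({i // i ∈ T} → ℝ) = T.card := by
    simp [Module.finrank_fintype_fun_eq_card, Fintype.card_coe]
  have hker2 : 2 ≤ Module.finrank ℝ (LinearMap.ker φ) := by
    have hrn := LinearMap.finrank_range_add_finrank_ker φ
    rw [hdim] at hrn
    omega
  set dT : {i // i ∈ T} → ℝ := fun i => d i with hdT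
  have hιd : ι dT = d := by
    funext i
    by_cases h : i ∈ T
    · simp [ι, dT, h]
    · have : ¬ d i ≠ 0 := by simpa [hT] using h
      simp [ι, h]
      exact (not_not.1 this).symm
  have hdT0 : dT ≠ 0 := by
    intro h
    apply hd.2.1
    rw [← hιd, h, map_zero]
  have hdT_ker : dT ∈ LinearMap.ker φ := by
    rw [LinearMap.mem_ker, hφ, LinearMap.comp_apply, hιd]
    exact hd.1
  have hspan : Module.finrank ℝ (Submodule.span ℝ {dT}) = 1 :=
    finrank_span_singleton hdT0
  have hnle : ¬ LinearMap.ker φ ≤ Submodule.span ℝ {dT} := by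
    intro hle
    have := Submodule.finrank_mono hle
    omega
  obtain ⟨x, hx_ker, hx_span⟩ := SetLike.not_le_iff_exists.1 hnle
  have hTne : T.Nonempty := by
    obtain ⟨i, hi⟩ : ∃ i, d i ≠ 0 := by
      by_contra h; push_neg at h; exact hd.2.1 (funext fun i => h i)
    exact ⟨i, by simp [hT, hi]⟩
  obtain ⟨i0, hi0T⟩ := hTne
  have hdi0 : d i0 ≠ 0 := by simpa [hT] using hi0T
  set j0 : {i // i ∈ T} := ⟨i0, hi0T⟩ with hj0
  set e' : {i // i ∈ T} → ℝ := d i0 • x - x j0 • dT with he'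
  have he'_ker : e' ∈ LinearMap.ker φ :=
    Submodule.sub_mem _ (Submodule.smul_mem _ _ hx_ker) (Submodule.smul_mem _ _ hdT_ker)
  have he'0 : e' ≠ 0 := by
    intro h
    apply hx_span
    have : d i0 • x = x j0 • dT := by
      have := sub_eq_zero.1 (he' ▸ h)
      exact this
    have hx : x = (d i0)⁻¹ • (x j0 • dT) := by
      rw [← this, smul_smul, inv_mul_cancel₀ hdi0, one_smul]
    rw [hx]
    exact Submodule.smul_mem _ _ (Submodule.smul_mem _ _ (Submodule.mem_span_singleton_self dT))
  set e : Fin n → ℝ := ι e' with he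
  have he_ker : e ∈ LinearMap.ker A.mulVecLin := he'_ker
  have he0 : e ≠ 0 := by
    intro h
    exact he'0 (hι_inj (by rw [map_zero]; exact h))
  have hsub : {i | e i ≠ 0} ⊆ {i | d i ≠ 0} := by
    intro i hi
    simp only [Set.mem_setOf_eq] at hi ⊢
    by_cases h : i ∈ T
    · simpa [hT] using h
    · exfalso; apply hi; simp [he, ι, h]
  have hei0 : e i0 = 0 := by
    have : e i0 = e' j0 := by simp [he, ι, hi0T, hj0]
    rw [this, he']
    simp [hdT, hj0]
    ring
  have hstrict : {i | e i ≠ 0} ⊂ {i | d i ≠ 0} := by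
    refine ⟨hsub, fun h => ?_⟩
    exact (h hdi0) hei0
  exact minimal_support _ d hd e he_ker he0 hstrict
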